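/- Let C_q(x) = c·W_q(x) − Z_q(x). Then for all a, b ≥ 0: (i) C_q'(b) = λ/(c·γ(b)); (ii) c·γ(b)·W_q(b) = 1 + μ_α·θ(b); (iii) e^{−μ_α a}·C_q'(b) + q·W_q(b) > 0 and (1 − k·m(a)·C_q'(b)) / (e^{−μ_α a}·C_q'(b) + q·W_q(b)) = (c·γ(b) − λk·m(a)) / (q + μ_α·q·θ(b) + λ·e^{−μ_α a}). -/

import Mathlib

theorem stmt8 (c α lam q μ k : ℝ)
    (hc : 0 < c) (hα0 : 0 < α) (hα1 : α ≤ 1)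
    (hlam : 0 < lam) (hq : 0 < q) (hμ : 0 < μ) (hk : 1 ≤ k)
    (Δ Φ ρ : ℝ)
    (hΔ : Δ = (c*μ - α*lam - α*q)^2 + 4*α*c*μ*q)
    (hΦ : Φ = (-(c*μ - α*lam - α*q) + Real.sqrt Δ) / (2*α*c))
    (hρ : ρ = (-(c*μ - α*lam - α*q) - Real.sqrt Δ) / (2*α*c))
    (W Z C γ θf m : ℝ → ℝ)
    (hW : ∀ x, W x = ((α*Φ + μ)*Real.exp (Φ*x) - (α*ρ + μ)*Real.exp (ρ*x))/(α*c*(Φ - ρ)))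
    (hZ : ∀ x, Z x = 1 + q * ∫ y in (0:ℝ)..x, W y)
    (hC : ∀ x, C x = c * W x - Z x)
    (hγ : ∀ b, γ b = (Φ - ρ)/(Φ*Real.exp (Φ*b) - ρ*Real.exp (ρ*b)))
    (hθf : ∀ b, θf b = (Real.exp (Φ*b) - Real.exp (ρ*b))/(Φ*Real.exp (Φ*b) - ρ*Real.exp (ρ*b)))
    (hm : ∀ a, m a = (1 - Real.exp (-(μ/α)*a)*((μ/α)*a + 1))/(μ/α)) :
    ∀ a : ℝ, 0 ≤ a → ∀ b : ℝ, 0 ≤ b →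
      (deriv C b = lam/(c * γ b)) ∧
      (c * γ b * W b = 1 + (μ/α) * θf b) ∧
      (0 < Real.exp (-(μ/α)*a) * deriv C b + q * W b) ∧
      ((1 - k * m a * deriv C b) / (Real.exp (-(μ/α)*a) * deriv C b + q * W b)
        = (c * γ b - lam * k * m a) / (q + (μ/α)*q*θf b + lam*Real.exp (-(μ/α)*a))) := by
  intro a ha b hb
  obtain ⟨B, hB⟩ : ∃ B : ℝ, B = c*μ - α*lam - α*q := ⟨_, rfl⟩
  rw [← hB] at hΔ hΦ hρ
  have hαc : (0:ℝ) < α*c := mul_pos hα0 hc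
  have hαne : α ≠ 0 := ne_of_gt hα0
  have hcne : c ≠ 0 := ne_of_gt hc
  have hΔpos : 0 < Δ := by
    rw [hΔ]; positivity
  have hs : Real.sqrt Δ ^ 2 = Δ := Real.sq_sqrt hΔpos.le
  have hBs : |B| < Real.sqrt Δ := by
    rw [← Real.sqrt_sq_eq_abs]
    apply Real.sqrt_lt_sqrt (sq_nonneg B)
    rw [hΔ]; nlinarith [mul_pos (mul_pos hα0 hc) (mul_pos hμ hq)]
  have hBlt : B < Real.sqrt Δ := (le_abs_self B).trans_lt hBs
  have hBlt' : -Real.sqrt Δ < B := by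
    have := (neg_abs_le B); linarith [hBs]
  have hΦpos : 0 < Φ := by
    rw [hΦ]; apply div_pos; linarith; linarith
  have hρneg : ρ < 0 := by
    rw [hρ]; apply div_neg_of_neg_of_pos; linarith; linarith
  have hρΦ : ρ < Φ := hρneg.trans hΦpos
  have hΦρne : Φ - ρ ≠ 0 := by linarith
  -- quadratic identities
  have hΦs : 2*α*c*Φ = -B + Real.sqrt Δ := by
    rw [hΦ]; field_simp
  have hρs : 2*α*c*ρ = -B - Real.sqrt Δ := by
    rw [hρ]; field_simp
  have h4ne : (4*(α*c)) ≠ 0 := by positivity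
  have hQΦ : α*c*Φ^2 + B*Φ - μ*q = 0 := by
    have h4 : 4*(α*c)*(α*c*Φ^2 + B*Φ - μ*q) = 0 := by
      linear_combination (2*α*c*Φ + B + Real.sqrt Δ) * hΦs + hs + hΔ
    exact (mul_eq_zero.mp h4).resolve_left h4ne
  have hQρ : α*c*ρ^2 + B*ρ - μ*q = 0 := by
    have h4 : 4*(α*c)*(α*c*ρ^2 + B*ρ - μ*q) = 0 := by
      linear_combination (2*α*c*ρ + B - Real.sqrt Δ) * hρs + hs + hΔ
    exact (mul_eq_zero.mp h4).resolve_left h4ne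
  have hαρμ : 0 < α*ρ + μ := by
    have h2 : Δ < (c*μ + α*lam + α*q)^2 := by
      rw [hΔ, hB]; nlinarith [mul_pos (mul_pos hα0 hc) (mul_pos hμ hlam)]
    have hlt : Real.sqrt Δ < c*μ + α*lam + α*q :=
      (Real.sqrt_lt' (by positivity)).mpr h2
    rw [hρ]
    have : α * ((-B - Real.sqrt Δ) / (2*α*c)) + μ = (c*μ + α*lam + α*q - Real.sqrt Δ) / (2*c) := by
      field_simp
      linear_combination (-1) * hB
    rw [this]
    apply div_pos; linarith; linarith
  have hαΦμ : 0 < α*Φ + μ := by nlinarith [mul_pos hα0 hΦpos]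
  obtain ⟨E, hE⟩ : ∃ E : ℝ, E = Real.exp (Φ*b) := ⟨_, rfl⟩
  obtain ⟨F, hF⟩ : ∃ F : ℝ, F = Real.exp (ρ*b) := ⟨_, rfl⟩
  have hEpos : 0 < E := hE ▸ Real.exp_pos _
  have hFpos : 0 < F := hF ▸ Real.exp_pos _
  have hE1 : 1 ≤ E := by rw [hE]; exact Real.one_le_exp (mul_nonneg hΦpos.le hb)
  have hF1 : F ≤ 1 := by
    rw [hF]; exact Real.exp_le_one_iff.mpr (mul_nonpos_of_nonpos_of_nonneg hρneg.le hb)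
  have hD : 0 < Φ*E - ρ*F := by
    have h1 := mul_pos hΦpos hEpos
    have h2 := mul_neg_of_neg_of_pos hρneg hFpos
    linarith
  have hDne : Φ*E - ρ*F ≠ 0 := ne_of_gt hD
  -- W positive
  have hWb : 0 < W b := by
    rw [hW b, ← hE, ← hF]
    apply div_pos _ (mul_pos hαc (sub_pos.mpr hρΦ))
    have h1 := mul_le_mul_of_nonneg_left hE1 hαΦμ.le
    have h2 := mul_le_mul_of_nonneg_left hF1 hαρμ.le
    have h3 := mul_pos hα0 (sub_pos.mpr hρΦ)
    linarith
  -- derivative of W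
  have hWder : ∀ x, HasDerivAt W
      (((α*Φ+μ)*(Real.exp (Φ*x)*Φ) - (α*ρ+μ)*(Real.exp (ρ*x)*ρ))/(α*c*(Φ-ρ))) x := by
    intro x
    have hWdef : W = fun x => ((α*Φ + μ)*Real.exp (Φ*x) - (α*ρ + μ)*Real.exp (ρ*x))/(α*c*(Φ - ρ)) :=
      funext hW
    rw [hWdef]
    have h1 : HasDerivAt (fun x : ℝ => Real.exp (Φ*x)) (Real.exp (Φ*x)*Φ) x := by
      simpa using ((hasDerivAt_id x).const_mul Φ).exp
    have h2 : HasDerivAt (fun x : ℝ => Real.exp (ρ*x)) (Real.exp (ρ*x)*ρ) x := by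
      simpa using ((hasDerivAt_id x).const_mul ρ).exp
    exact ((h1.const_mul (α*Φ+μ)).sub (h2.const_mul (α*ρ+μ))).div_const _
  have hWcont : Continuous W := by
    have hWdef : W = fun x => ((α*Φ + μ)*Real.exp (Φ*x) - (α*ρ + μ)*Real.exp (ρ*x))/(α*c*(Φ - ρ)) :=
      funext hW
    rw [hWdef]; fun_prop
  -- derivative of C
  have hCder : HasDerivAt C
      (c * (((α*Φ+μ)*(Real.exp (Φ*b)*Φ) - (α*ρ+μ)*(Real.exp (ρ*b)*ρ))/(α*c*(Φ-ρ))) - q * W b) b := by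
    have hCdef : C = fun x => c * W x - (1 + q * ∫ y in (0:ℝ)..x, W y) := by
      funext x; rw [hC x, hZ x]
    rw [hCdef]
    have hI : HasDerivAt (fun x : ℝ => ∫ y in (0:ℝ)..x, W y) (W b) b :=
      (hWcont.integral_hasStrictDerivAt 0 b).hasDerivAt
    exact ((hWder b).const_mul c).sub ((hI.const_mul q).const_add 1)
  have hdC : deriv C b = c * (((α*Φ+μ)*(E*Φ) - (α*ρ+μ)*(F*ρ))/(α*c*(Φ-ρ))) - q * W b := by
    rw [hCder.deriv, ← hE, ← hF]
  -- key simplification: deriv C b = lam*(Φ*E - ρ*F)/(c*(Φ-ρ))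
  have hdC2 : deriv C b = lam*(Φ*E - ρ*F)/(c*(Φ-ρ)) := by
    rw [hdC, hW b, ← hE, ← hF]
    field_simp
    linear_combination E*hQΦ - F*hQρ - (Φ*E - ρ*F)*hB
  have hγb : γ b = (Φ - ρ)/(Φ*E - ρ*F) := by rw [hγ b, ← hE, ← hF]
  have hθb : θf b = (E - F)/(Φ*E - ρ*F) := by rw [hθf b, ← hE, ← hF]
  have hγpos : 0 < γ b := by rw [hγb]; apply div_pos (by linarith) hD
  have hγne : γ b ≠ 0 := ne_of_gt hγpos
  have part1 : deriv C b = lam/(c * γ b) := by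
    rw [hdC2, hγb]; field_simp
  have part2 : c * γ b * W b = 1 + (μ/α) * θf b := by
    rw [hγb, hθb, hW b, ← hE, ← hF]
    field_simp
    ring
  have hdCpos : 0 < deriv C b := by
    rw [hdC2]; exact div_pos (mul_pos hlam hD) (mul_pos hc (sub_pos.mpr hρΦ))
  have hexp : 0 < Real.exp (-(μ/α)*a) := Real.exp_pos _
  have part3 : 0 < Real.exp (-(μ/α)*a) * deriv C b + q * W b :=
    add_pos (mul_pos hexp hdCpos) (mul_pos hq hWb)
  refine ⟨part1, part2, part3, ?_⟩
  have hθnn : 0 ≤ θf b := by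
    rw [hθb]; apply div_nonneg _ hD.le; linarith
  have hden2 : 0 < q + (μ/α)*q*θf b + lam*Real.exp (-(μ/α)*a) := by
    have h1 : 0 ≤ (μ/α)*q*θf b := mul_nonneg (by positivity) hθnn
    have h2 : 0 < lam*Real.exp (-(μ/α)*a) := by positivity
    linarith
  rw [div_eq_div_iff (ne_of_gt part3) (ne_of_gt hden2)]
  have hr1 : c * γ b * deriv C b = lam := by
    rw [part1]; field_simp
  linear_combination (-(Real.exp (-(μ/α)*a)) - k * m a * q * W b) * hr1 +
    (-q + k * m a * q * deriv C b) * part2
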